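/- arXiv:2105.07199 — 2 statements merged into one kernel-verified Lean document; each statement's English description precedes it below -/
import Mathlib

section
/- Let D ∈ ℝ^{m×n} with n ≥ 1, c ∈ ℝ^m, ρ > 0, and τ ∈ ℝ. Then the following are equivalent: (a) for every ξ ∈ ℝ^n with ‖ξ‖ ≤ ρ one has ‖Dξ − c‖² ≤ τ; (b) there exists λ ≥ 0 such that the (1+n+m)×(1+n+m) symmetric block matrix with blocks [[τ − λρ², 0, cᵀ], [0, λI_n, Dᵀ], [c, D, I_m]] is positive semidefinite. -/
open Matrix

/-- Euclidean norm of a vector in `ℝ^n`. -/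
noncomputable def enorm {n : ℕ} (x : Fin n → ℝ) : ℝ := Real.sqrt (∑ i, x i ^ 2)

/-- The `(1+n+m)×(1+n+m)` symmetric block matrix
`[[τ − λρ², 0, cᵀ], [0, λIₙ, Dᵀ], [c, D, Iₘ]]`. -/
noncomputable def bigLMI {m n : ℕ} (D : Matrix (Fin m) (Fin n) ℝ) (c : Fin m → ℝ)
    (topLeft lam : ℝ) :
    Matrix (Fin 1 ⊕ (Fin n ⊕ Fin m)) (Fin 1 ⊕ (Fin n ⊕ Fin m)) ℝ :=
  Matrix.fromBlocks
    (Matrix.of fun (_ : Fin 1) (_ : Fin 1) => topLeft)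
    (Matrix.of fun (_ : Fin 1) (j : Fin n ⊕ Fin m) =>
      Sum.elim (fun _ : Fin n => (0 : ℝ)) (fun i : Fin m => c i) j)
    (Matrix.of fun (i : Fin n ⊕ Fin m) (_ : Fin 1) =>
      Sum.elim (fun _ : Fin n => (0 : ℝ)) (fun k : Fin m => c k) i)
    (Matrix.fromBlocks (lam • (1 : Matrix (Fin n) (Fin n) ℝ)) Dᵀ
      D (1 : Matrix (Fin m) (Fin m) ℝ))

-- helper: expansion of (a+b)⬝ᵥ(a+b)
lemma dot_sq_add {k : ℕ} (a b : Fin k → ℝ) :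
    (a + b) ⬝ᵥ (a + b) = a ⬝ᵥ a + 2 * (a ⬝ᵥ b) + b ⬝ᵥ b := by
  rw [dotProduct_add, add_dotProduct, add_dotProduct, dotProduct_comm b a]; ring

lemma dot_self_nonneg {k : ℕ} (a : Fin k → ℝ) : 0 ≤ a ⬝ᵥ a :=
  Finset.sum_nonneg fun i _ => mul_self_nonneg _

lemma slemma {m n : ℕ} (hn : 1 ≤ n) (D : Matrix (Fin m) (Fin n) ℝ) (c : Fin m → ℝ)
    (ρ τ : ℝ) (hρ : 0 < ρ)
    (H : ∀ ξ : Fin n → ℝ, ξ ⬝ᵥ ξ ≤ ρ^2 → (D *ᵥ ξ - c) ⬝ᵥ (D *ᵥ ξ - c) ≤ τ) :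
    ∃ lam : ℝ, 0 ≤ lam ∧
      (∀ d : Fin n → ℝ, (D *ᵥ d) ⬝ᵥ (D *ᵥ d) ≤ lam * (d ⬝ᵥ d)) ∧
      (∀ ξ : Fin n → ℝ, (D *ᵥ ξ - c) ⬝ᵥ (D *ᵥ ξ - c) ≤ τ + lam * (ξ ⬝ᵥ ξ - ρ^2)) := by
  classical
  set f : (Fin n → ℝ) → ℝ := fun ξ => (D *ᵥ ξ - c) ⬝ᵥ (D *ᵥ ξ - c) with hf_def
  set S : Set (Fin n → ℝ) := {z | z ⬝ᵥ z = ρ^2} with hS_def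
  -- continuity of f
  have hg : ∀ i, Continuous fun ξ : Fin n → ℝ => (D *ᵥ ξ - c) i := by
    intro i
    simp only [Pi.sub_apply, Matrix.mulVec, dotProduct]
    exact (continuous_finset_sum _ fun j _ =>
      (continuous_const.mul (continuous_apply j))).sub continuous_const
  have hfc : Continuous f := by
    have : f = fun ξ => ∑ i, (D *ᵥ ξ - c) i * (D *ᵥ ξ - c) i := rfl
    rw [this]
    exact continuous_finset_sum _ fun i _ => (hg i).mul (hg i)
  -- S is compact
  have hScl : IsClosed S := by
    have : Continuous fun z : Fin n → ℝ => z ⬝ᵥ z := by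
      simp only [dotProduct]
      exact continuous_finset_sum _ fun j _ => (continuous_apply j).mul (continuous_apply j)
    exact isClosed_eq this continuous_const
  have hSbd : Bornology.IsBounded S := by
    apply (Metric.isBounded_closedBall (x := (0 : Fin n → ℝ)) (r := ρ)).subset
    intro z hz
    have hz' : z ⬝ᵥ z = ρ^2 := hz
    rw [Metric.mem_closedBall, dist_zero_right]
    rw [pi_norm_le_iff_of_nonneg hρ.le]
    intro i
    have h1 : z i * z i ≤ z ⬝ᵥ z := by
      have := Finset.single_le_sum (f := fun j => z j * z j)
        (fun j _ => mul_self_nonneg (z j)) (Finset.mem_univ i)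
      exact this
    rw [Real.norm_eq_abs, abs_le]
    constructor <;> nlinarith [h1, hz']
  have hScp : IsCompact S := Metric.isCompact_of_isClosed_isBounded hScl hSbd
  have hSne : S.Nonempty := by
    have h0 : (Pi.single (⟨0, hn⟩ : Fin n) ρ : Fin n → ℝ) ⬝ᵥ Pi.single (⟨0, hn⟩ : Fin n) ρ
        = ρ^2 := by
      rw [dotProduct_single, Pi.single_eq_same, sq]
    exact ⟨_, h0⟩
  obtain ⟨p, hpS, hpmax⟩ := hScp.exists_isMaxOn hSne hfc.continuousOn
  have hpp : p ⬝ᵥ p = ρ^2 := hpS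
  have hmax : ∀ z, z ⬝ᵥ z = ρ^2 → f z ≤ f p := fun z hz => hpmax hz
  -- notation
  set U : (Fin n → ℝ) → ℝ := fun d => (D *ᵥ p - c) ⬝ᵥ (D *ᵥ d) with hU_def
  set B : (Fin n → ℝ) → ℝ := fun d => (D *ᵥ d) ⬝ᵥ (D *ᵥ d) with hB_def
  -- expansion of f at p + h
  have hexp : ∀ h : Fin n → ℝ, f (p + h) = f p + 2 * U h + B h := by
    intro h
    have e : D *ᵥ (p + h) - c = (D *ᵥ p - c) + D *ᵥ h := by
      rw [mulVec_add]; abel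
    show (D *ᵥ (p + h) - c) ⬝ᵥ (D *ᵥ (p + h) - c) = _
    rw [e, dot_sq_add]
  -- the key inequality (★)
  have star : ∀ d : Fin n → ℝ,
      (p ⬝ᵥ d)^2 * B d ≤ (p ⬝ᵥ d) * (d ⬝ᵥ d) * U d := by
    intro d
    by_cases hd : d = 0
    · subst hd; simp [hB_def, hU_def]
    · have hq : 0 < d ⬝ᵥ d :=
        lt_of_le_of_ne (dot_self_nonneg d) (fun h => hd (dotProduct_self_eq_zero.mp h.symm))
      set q := d ⬝ᵥ d with hq_def
      set t := 2 * (p ⬝ᵥ d) / q with ht_def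
      have htq : t * q = 2 * (p ⬝ᵥ d) := by
        rw [ht_def]; field_simp
      have hz : (p + (-t) • d) ⬝ᵥ (p + (-t) • d) = ρ^2 := by
        rw [dot_sq_add, hpp, dotProduct_smul, smul_dotProduct, dotProduct_smul]
        simp only [smul_eq_mul]
        linear_combination t * htq
      have hle := hmax _ hz
      rw [hexp ((-t) • d)] at hle
      have hUs : U ((-t) • d) = -t * U d := by
        rw [hU_def]; simp only []
        rw [mulVec_smul, dotProduct_smul, smul_eq_mul]
      have hBs : B ((-t) • d) = t^2 * B d := by
        rw [hB_def]; simp only []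
        rw [mulVec_smul, smul_dotProduct, dotProduct_smul, smul_eq_mul, smul_eq_mul]
        ring
      rw [hUs, hBs] at hle
      -- hle : f p + 2 * (-t * U d) + t ^ 2 * B d ≤ f p
      have key : t^2 * B d ≤ 2 * t * U d := by linarith
      have h5 : q^2/4 * (t^2 * B d) ≤ q^2/4 * (2 * t * U d) :=
        mul_le_mul_of_nonneg_left key (by positivity)
      have hpd : p ⬝ᵥ d = t * q / 2 := by linarith [htq]
      rw [hpd]
      nlinarith [h5]
  -- u vector
  set u : Fin n → ℝ := Dᵀ *ᵥ (D *ᵥ p - c) with hu_def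
  have hu_dot : ∀ d, u ⬝ᵥ d = U d := by
    intro d
    rw [dotProduct_comm, hu_def, dotProduct_mulVec, vecMul_transpose, dotProduct_comm]
  -- step 1 : U vanishes on the orthogonal complement of p
  have hperp : ∀ d : Fin n → ℝ, p ⬝ᵥ d = 0 → U d = 0 := by
    intro d hpd
    by_cases hd : d = 0
    · subst hd; simp [hU_def]
    · have hq : 0 < d ⬝ᵥ d :=
        lt_of_le_of_ne (dot_self_nonneg d) (fun h => hd (dotProduct_self_eq_zero.mp h.symm))
      set q := d ⬝ᵥ d with hq_def
      set X := (D *ᵥ d) ⬝ᵥ (D *ᵥ p) with hX_def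
      -- components after perturbation
      have hcomp : ∀ ε : ℝ,
          p ⬝ᵥ (d + ε • p) = ε * ρ^2 ∧
          (d + ε • p) ⬝ᵥ (d + ε • p) = q + ε^2 * ρ^2 ∧
          U (d + ε • p) = U d + ε * U p ∧
          B (d + ε • p) = B d + 2*ε*X + ε^2 * B p := by
        intro ε
        refine ⟨?_, ?_, ?_, ?_⟩
        · rw [dotProduct_add, dotProduct_smul, hpd, hpp, smul_eq_mul]; ring
        · rw [dot_sq_add, dotProduct_smul, smul_dotProduct, dotProduct_smul,
            dotProduct_comm d p, hpd, hpp]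
          simp only [smul_eq_mul]; ring
        · simp only [hU_def]
          rw [mulVec_add, dotProduct_add, mulVec_smul, dotProduct_smul, smul_eq_mul]
        · simp only [hB_def]
          rw [mulVec_add, mulVec_smul, dot_sq_add, dotProduct_smul, smul_dotProduct,
            dotProduct_smul]
          simp only [smul_eq_mul]
          rw [hX_def]; ring
      set L : ℝ → ℝ := fun ε => ε * ρ^4 * (B d + 2*ε*X + ε^2 * B p) with hL_def
      set R : ℝ → ℝ := fun ε => ρ^2 * (q + ε^2 * ρ^2) * (U d + ε * U p) with hR_def
      have hstar2 : ∀ ε : ℝ, ε * L ε ≤ ε * R ε := by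
        intro ε
        obtain ⟨h1, h2, h3, h4⟩ := hcomp ε
        have h := star (d + ε • p)
        rw [h1, h2, h3, h4] at h
        have e1 : ε * L ε = (ε * ρ^2)^2 * (B d + 2*ε*X + ε^2 * B p) := by
          rw [hL_def]; ring
        have e2 : ε * R ε = (ε * ρ^2) * (q + ε^2 * ρ^2) * (U d + ε * U p) := by
          rw [hR_def]; ring
        rw [e1, e2]; exact h
      have hLc : Continuous L := by rw [hL_def]; fun_prop
      have hRc : Continuous R := by rw [hR_def]; fun_prop
      have hL0 : Filter.Tendsto L (nhds 0) (nhds 0) := by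
        have := hLc.tendsto 0
        have e : L 0 = 0 := by rw [hL_def]; norm_num
        rwa [e] at this
      have hR0 : Filter.Tendsto R (nhds 0) (nhds (ρ^2 * q * U d)) := by
        have := hRc.tendsto 0
        have e : R 0 = ρ^2 * q * U d := by rw [hR_def]; norm_num
        rwa [e] at this
      have hpos : 0 ≤ ρ^2 * q * U d := by
        refine le_of_tendsto_of_tendsto (b := nhdsWithin (0:ℝ) (Set.Ioi 0))
          (hL0.mono_left nhdsWithin_le_nhds) (hR0.mono_left nhdsWithin_le_nhds) ?_
        refine eventually_nhdsWithin_of_forall (fun ε hε => ?_)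
        have hε' : (0:ℝ) < ε := hε
        exact (mul_le_mul_iff_right₀ hε').mp (hstar2 ε)
      have hneg : ρ^2 * q * U d ≤ 0 := by
        refine le_of_tendsto_of_tendsto (b := nhdsWithin (0:ℝ) (Set.Iio 0))
          (hR0.mono_left nhdsWithin_le_nhds) (hL0.mono_left nhdsWithin_le_nhds) ?_
        refine eventually_nhdsWithin_of_forall (fun ε hε => ?_)
        have hε' : ε < (0:ℝ) := hε
        exact (mul_le_mul_left_of_neg hε').mp (hstar2 ε)
      have h0 : ρ^2 * q * U d = 0 := le_antisymm hneg hpos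
      have hrq : (0:ℝ) < ρ^2 * q := by positivity
      have := mul_eq_zero.mp h0
      rcases this with h | h
      · exact absurd h (ne_of_gt hrq)
      · exact h
  -- the multiplier
  set lam := U p / ρ^2 with hlam_def
  have hup : u ⬝ᵥ p = U p := hu_dot p
  have hu : u = lam • p := by
    have hpw : p ⬝ᵥ (u - lam • p) = 0 := by
      rw [dotProduct_sub, dotProduct_smul, smul_eq_mul, hpp, dotProduct_comm, hup, hlam_def]
      field_simp
      ring
    have hUw : U (u - lam • p) = 0 := hperp _ hpw
    have hww : (u - lam • p) ⬝ᵥ (u - lam • p) = 0 := by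
      have e : (u - lam • p) ⬝ᵥ (u - lam • p)
          = u ⬝ᵥ (u - lam • p) - lam * (p ⬝ᵥ (u - lam • p)) := by
        rw [sub_dotProduct, smul_dotProduct, smul_eq_mul]
      rw [e, hu_dot, hUw, hpw]
      ring
    have hw0 : u - lam • p = 0 := dotProduct_self_eq_zero.mp hww
    exact sub_eq_zero.mp hw0
  have hUlin : ∀ d, U d = lam * (p ⬝ᵥ d) := by
    intro d
    rw [← hu_dot, hu, smul_dotProduct, smul_eq_mul]
  -- step 2 : lam certifies the operator-norm bound
  have case1 : ∀ d : Fin n → ℝ, p ⬝ᵥ d ≠ 0 → B d ≤ lam * (d ⬝ᵥ d) := by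
    intro d hpd
    have h := star d
    rw [hUlin d] at h
    have hpd2 : 0 < (p ⬝ᵥ d)^2 := by positivity
    nlinarith [h, hpd2]
  have hBle : ∀ d : Fin n → ℝ, B d ≤ lam * (d ⬝ᵥ d) := by
    intro d
    by_cases hpd : p ⬝ᵥ d = 0
    · set X := (D *ᵥ d) ⬝ᵥ (D *ᵥ p) with hX_def
      set q := d ⬝ᵥ d with hq_def
      have hcase : ∀ ε : ℝ, 0 < ε →
          B d + 2*ε*X + ε^2 * B p ≤ lam * (q + ε^2 * ρ^2) := by
        intro ε hε
        have hpd' : p ⬝ᵥ (d + ε • p) = ε * ρ^2 := by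
          rw [dotProduct_add, dotProduct_smul, hpd, hpp, smul_eq_mul]; ring
        have hne : p ⬝ᵥ (d + ε • p) ≠ 0 := by
          rw [hpd']; positivity
        have h := case1 _ hne
        have hq' : (d + ε • p) ⬝ᵥ (d + ε • p) = q + ε^2 * ρ^2 := by
          rw [dot_sq_add, dotProduct_smul, smul_dotProduct, dotProduct_smul,
            dotProduct_comm d p, hpd, hpp]
          simp only [smul_eq_mul]; ring
        have hB' : B (d + ε • p) = B d + 2*ε*X + ε^2 * B p := by
          simp only [hB_def]
          rw [mulVec_add, mulVec_smul, dot_sq_add, dotProduct_smul, smul_dotProduct,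
            dotProduct_smul]
          simp only [smul_eq_mul]
          rw [hX_def]; ring
        rw [hq', hB'] at h
        exact h
      have hLc : Continuous (fun ε : ℝ => B d + 2*ε*X + ε^2 * B p) := by fun_prop
      have hRc : Continuous (fun ε : ℝ => lam * (q + ε^2 * ρ^2)) := by fun_prop
      have hL0 : Filter.Tendsto (fun ε : ℝ => B d + 2*ε*X + ε^2 * B p) (nhds 0) (nhds (B d)) := by
        have := hLc.tendsto 0
        have e : B d + 2*(0:ℝ)*X + (0:ℝ)^2 * B p = B d := by ring
        rwa [e] at this
      have hR0 : Filter.Tendsto (fun ε : ℝ => lam * (q + ε^2 * ρ^2)) (nhds 0)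
          (nhds (lam * q)) := by
        have := hRc.tendsto 0
        have e : lam * (q + (0:ℝ)^2 * ρ^2) = lam * q := by ring
        rwa [e] at this
      refine le_of_tendsto_of_tendsto (b := nhdsWithin (0:ℝ) (Set.Ioi 0))
        (hL0.mono_left nhdsWithin_le_nhds) (hR0.mono_left nhdsWithin_le_nhds) ?_
      exact eventually_nhdsWithin_of_forall (fun ε hε => hcase ε hε)
    · exact case1 d hpd
  -- lam is nonnegative
  have hlam0 : 0 ≤ lam := by
    have h1 := hBle p
    rw [hpp] at h1
    have h2 : 0 ≤ B p := dot_self_nonneg _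
    nlinarith [h1, h2, mul_pos hρ hρ]
  -- the global inequality
  have hfinal : ∀ ξ : Fin n → ℝ, f ξ ≤ τ + lam * (ξ ⬝ᵥ ξ - ρ^2) := by
    intro ξ
    have hxi : ξ = p + (ξ - p) := by abel
    have hfp : f p ≤ τ := H p (le_of_eq hpp)
    have hxx : ξ ⬝ᵥ ξ = ρ^2 + 2 * (p ⬝ᵥ (ξ - p)) + (ξ - p) ⬝ᵥ (ξ - p) := by
      calc ξ ⬝ᵥ ξ = (p + (ξ - p)) ⬝ᵥ (p + (ξ - p)) := by rw [← hxi]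
        _ = p ⬝ᵥ p + 2 * (p ⬝ᵥ (ξ - p)) + (ξ - p) ⬝ᵥ (ξ - p) := dot_sq_add _ _
        _ = _ := by rw [hpp]
    have hfe := hexp (ξ - p)
    rw [← hxi] at hfe
    have h1 := hBle (ξ - p)
    have h2 := hUlin (ξ - p)
    rw [h2] at hfe
    rw [hxx]
    nlinarith [hfe, h1, hfp]
  exact ⟨lam, hlam0, hBle, hfinal⟩

lemma quadform {m n : ℕ} (D : Matrix (Fin m) (Fin n) ℝ) (c : Fin m → ℝ) (tl lam : ℝ)
    (t : ℝ) (x : Fin n → ℝ) (y : Fin m → ℝ) :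
    (Sum.elim (fun _ : Fin 1 => t) (Sum.elim x y)) ⬝ᵥ
      (bigLMI D c tl lam).mulVec (Sum.elim (fun _ : Fin 1 => t) (Sum.elim x y)) =
    tl * t^2 + 2*t*(c ⬝ᵥ y) + lam*(x ⬝ᵥ x) + 2*(D.mulVec x ⬝ᵥ y) + y ⬝ᵥ y := by
  have hcb : (Matrix.of fun (_ : Fin 1) (j : Fin n ⊕ Fin m) =>
      Sum.elim (fun _ : Fin n => (0 : ℝ)) (fun i : Fin m => c i) j) *ᵥ (Sum.elim x y)
      = fun _ => c ⬝ᵥ y := by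
    funext i
    simp [Matrix.mulVec, dotProduct, Fintype.sum_sum_type]
  have hlb : (Matrix.of fun (i : Fin n ⊕ Fin m) (_ : Fin 1) =>
      Sum.elim (fun _ : Fin n => (0 : ℝ)) (fun k : Fin m => c k) i) *ᵥ (fun _ : Fin 1 => t)
      = Sum.elim (fun _ : Fin n => (0:ℝ)) (fun k => c k * t) := by
    funext i
    rcases i with i | i <;> simp [Matrix.mulVec, dotProduct]
  have htl : (Matrix.of fun (_ : Fin 1) (_ : Fin 1) => tl) *ᵥ (fun _ : Fin 1 => t)
      = fun _ => tl * t := by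
    funext i; simp [Matrix.mulVec, dotProduct]
  rw [bigLMI, fromBlocks_mulVec, fromBlocks_mulVec]
  simp only [Sum.elim_comp_inl, Sum.elim_comp_inr]
  rw [hcb, hlb, htl, sumElim_dotProduct_sumElim]
  have h1 : ∀ a b : ℝ, (fun _ : Fin 1 => a) ⬝ᵥ (fun _ : Fin 1 => b) = a * b := by
    intro a b; simp [dotProduct]
  have h2 : (fun k => c k * t) ⬝ᵥ y = t * (c ⬝ᵥ y) := by
    simp only [dotProduct, Finset.mul_sum]
    exact Finset.sum_congr rfl fun i _ => by ring
  simp only [dotProduct_add, sumElim_dotProduct_sumElim]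
  rw [smul_mulVec, one_mulVec, dotProduct_smul, dotProduct_mulVec x Dᵀ y, vecMul_transpose,
    dotProduct_comm y (D *ᵥ x)]
  have h3 : (x ⬝ᵥ fun _ => (0:ℝ)) = 0 := by simp [dotProduct]
  rw [h3, one_mulVec, smul_eq_mul]
  ring_nf
  rw [h1, h1]
  have h4 : y ⬝ᵥ (fun k => t * c k) = t * (c ⬝ᵥ y) := by
    simp only [dotProduct, Finset.mul_sum]
    exact Finset.sum_congr rfl fun i _ => by ring
  rw [h4]
  ring


lemma enorm_sq {k : ℕ} (x : Fin k → ℝ) : _root_.enorm x ^ 2 = x ⬝ᵥ x := by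
  rw [_root_.enorm, Real.sq_sqrt (by positivity)]
  exact Finset.sum_congr rfl fun i _ => pow_two (x i)

lemma enorm_le_iff {k : ℕ} (x : Fin k → ℝ) {r : ℝ} (hr : 0 ≤ r) :
    _root_.enorm x ≤ r ↔ x ⬝ᵥ x ≤ r^2 := by
  rw [← enorm_sq x]
  exact (pow_le_pow_iff_left₀ (n := 2) (Real.sqrt_nonneg _) hr (by norm_num)).symm

lemma bigLMI_herm {m n : ℕ} (D : Matrix (Fin m) (Fin n) ℝ) (c : Fin m → ℝ)
    (tl lam : ℝ) : (bigLMI D c tl lam).IsHermitian := by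
  show (bigLMI D c tl lam)ᴴ = bigLMI D c tl lam
  ext i j
  rcases i with i | i
  · rcases j with j | j
    · simp [bigLMI]
    · rcases j with j | j <;> simp [bigLMI]
  · rcases j with j | j
    · rcases i with i | i <;> simp [bigLMI]
    · rcases i with i | i <;> rcases j with j | j <;>
        simp [bigLMI, Matrix.one_apply, eq_comm]

lemma key_bound {m n : ℕ} (D : Matrix (Fin m) (Fin n) ℝ) (c : Fin m → ℝ) (ρ τ lam : ℝ)
    (hB : ∀ d : Fin n → ℝ, (D *ᵥ d) ⬝ᵥ (D *ᵥ d) ≤ lam * (d ⬝ᵥ d))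
    (hmain : ∀ ξ : Fin n → ℝ, (D *ᵥ ξ - c) ⬝ᵥ (D *ᵥ ξ - c) ≤ τ + lam * (ξ ⬝ᵥ ξ - ρ^2))
    (t : ℝ) (x : Fin n → ℝ) :
    (D *ᵥ x + t • c) ⬝ᵥ (D *ᵥ x + t • c) ≤ (τ - lam * ρ^2) * t^2 + lam * (x ⬝ᵥ x) := by
  by_cases ht : t = 0
  · subst ht
    simp only [zero_smul, add_zero]
    have h := hB x
    nlinarith [h]
  · set s := -(t⁻¹) with hs
    have hst : s * t = -1 := by rw [hs]; field_simp
    have e0 : D *ᵥ (s • x) - c = s • (D *ᵥ x + t • c) := by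
      rw [mulVec_smul, smul_add, smul_smul, hst, neg_one_smul, ← sub_eq_add_neg]
    have h1 := hmain (s • x)
    rw [e0] at h1
    rw [smul_dotProduct, dotProduct_smul, smul_dotProduct, dotProduct_smul] at h1
    simp only [smul_eq_mul] at h1
    set A := (D *ᵥ x + t • c) ⬝ᵥ (D *ᵥ x + t • c) with hA
    set Bx := x ⬝ᵥ x with hBx
    have h1m := mul_le_mul_of_nonneg_left h1 (sq_nonneg t)
    have e1 : t^2 * (s * (s * A)) = A := by
      calc t^2 * (s * (s * A)) = (s*t)^2 * A := by ring
        _ = A := by rw [hst]; ring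
    have e2 : t^2 * (τ + lam * (s * (s * Bx) - ρ^2)) = τ*t^2 + lam*Bx - lam*ρ^2*t^2 := by
      calc t^2 * (τ + lam * (s * (s * Bx) - ρ^2))
          = τ*t^2 + lam*((s*t)^2*Bx) - lam*ρ^2*t^2 := by ring
        _ = _ := by rw [hst]; ring
    rw [e1, e2] at h1m
    linarith

/-- The semi-infinite constraint characterization of Proposition 4 of the paper
(S-lemma plus Schur complement): `‖Dξ − c‖² ≤ τ` for all `‖ξ‖ ≤ ρ` iff some `λ ≥ 0`
certifies it via a linear matrix inequality. -/
theorem semi_infinite_iff_LMI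
    (m n : ℕ) (hn : 1 ≤ n) (D : Matrix (Fin m) (Fin n) ℝ) (c : Fin m → ℝ)
    (ρ τ : ℝ) (hρ : 0 < ρ) :
    (∀ ξ : Fin n → ℝ, _root_.enorm ξ ≤ ρ → (_root_.enorm (D.mulVec ξ - c)) ^ 2 ≤ τ) ↔
    (∃ lam : ℝ, 0 ≤ lam ∧ (bigLMI D c (τ - lam * ρ ^ 2) lam).PosSemidef) := by
  constructor
  · intro H
    have Hdot : ∀ ξ : Fin n → ℝ, ξ ⬝ᵥ ξ ≤ ρ^2 → (D *ᵥ ξ - c) ⬝ᵥ (D *ᵥ ξ - c) ≤ τ := by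
      intro ξ hξ
      have h := H ξ ((enorm_le_iff ξ hρ.le).mpr hξ)
      rwa [enorm_sq] at h
    obtain ⟨lam, hlam0, hB, hmain⟩ := slemma hn D c ρ τ hρ Hdot
    refine ⟨lam, hlam0, posSemidef_iff_dotProduct_mulVec.mpr ⟨bigLMI_herm D c _ lam, ?_⟩⟩
    intro v
    have hsv : star v = v := by funext i; exact star_trivial _
    have hv : v = Sum.elim (fun _ : Fin 1 => v (Sum.inl 0))
        (Sum.elim (fun i => v (Sum.inr (Sum.inl i))) (fun k => v (Sum.inr (Sum.inr k)))) := by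
      funext i
      rcases i with i | i
      · have h0 : i = 0 := Subsingleton.elim i 0
        rw [h0]
        rfl
      · rcases i with i | i <;> rfl
    set t := v (Sum.inl 0) with ht_def
    set x := fun i => v (Sum.inr (Sum.inl i)) with hx_def
    set y := fun k => v (Sum.inr (Sum.inr k)) with hy_def
    rw [hsv, hv, quadform]
    have hk := key_bound D c ρ τ lam hB hmain t x
    have hid : (τ - lam * ρ^2) * t^2 + 2*t*(c ⬝ᵥ y) + lam*(x ⬝ᵥ x) + 2*(D *ᵥ x ⬝ᵥ y) + y ⬝ᵥ y
        = (y + (D *ᵥ x + t • c)) ⬝ᵥ (y + (D *ᵥ x + t • c))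
          + ((τ - lam * ρ^2) * t^2 + lam * (x ⬝ᵥ x)
              - (D *ᵥ x + t • c) ⬝ᵥ (D *ᵥ x + t • c)) := by
      rw [dot_sq_add, dotProduct_add y, dotProduct_smul, dotProduct_comm y (D *ᵥ x),
        dotProduct_comm y c]
      simp only [smul_eq_mul]; ring
    have hgoal : (τ - lam * ρ ^ 2) * t^2 + 2*t*(c ⬝ᵥ y) + lam*(x ⬝ᵥ x)
        + 2*(D *ᵥ x ⬝ᵥ y) + y ⬝ᵥ y ≥ 0 := by
      rw [hid]
      have h2 := dot_self_nonneg (y + (D *ᵥ x + t • c))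
      linarith [hk, h2]
    linarith [hgoal]
  · rintro ⟨lam, hlam0, hpsd⟩ ξ hξ
    obtain ⟨hherm, hquad⟩ := posSemidef_iff_dotProduct_mulVec.mp hpsd
    have hxx : ξ ⬝ᵥ ξ ≤ ρ^2 := (enorm_le_iff ξ hρ.le).mp hξ
    have h := hquad (Sum.elim (fun _ : Fin 1 => (1:ℝ)) (Sum.elim (-ξ) (D *ᵥ ξ - c)))
    have hsv : star (Sum.elim (fun _ : Fin 1 => (1:ℝ)) (Sum.elim (-ξ) (D *ᵥ ξ - c)))
        = Sum.elim (fun _ : Fin 1 => (1:ℝ)) (Sum.elim (-ξ) (D *ᵥ ξ - c)) := by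
      funext i; exact star_trivial _
    rw [hsv, quadform] at h
    rw [mulVec_neg, neg_dotProduct, neg_dotProduct, dotProduct_neg] at h
    have hDy : (D *ᵥ ξ) ⬝ᵥ (D *ᵥ ξ - c) - c ⬝ᵥ (D *ᵥ ξ - c)
        = (D *ᵥ ξ - c) ⬝ᵥ (D *ᵥ ξ - c) := by
      rw [← sub_dotProduct]
    rw [enorm_sq]
    nlinarith [h, hDy, mul_nonneg hlam0 (sub_nonneg.mpr hxx)]
end

section
/- Let A ∈ ℝ^{m×n}, b ∈ ℝ^m, λ_g > 0, and let 𝒢 ⊆ ℝ^n be a nonempty closed convex set. Suppose g* ∈ 𝒢 minimizes ‖Ag − b‖² + λ_g‖g‖₁ over 𝒢, where ‖g‖₁ denotes the 1-norm. Define ρ_c := λ_g / (2‖Ag* − b‖) if Ag* ≠ b, and ρ_c := λ_g/2 otherwise. Then g* also minimizes ‖Ag − b‖ + ρ_c‖g‖₁ over 𝒢. -/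
open Matrix

/-- 1-norm of a vector in `ℝ^n`. -/
def onenorm {n : ℕ} (x : Fin n → ℝ) : ℝ := ∑ i, |x i|

lemma enorm_eq_norm {n : ℕ} (x : Fin n → ℝ) :
    _root_.enorm x = ‖(WithLp.equiv 2 (Fin n → ℝ)).symm x‖ := by
  simp [_root_.enorm, EuclideanSpace.norm_eq, sq_abs]

lemma enorm_nonneg' {n : ℕ} (x : Fin n → ℝ) : 0 ≤ _root_.enorm x := Real.sqrt_nonneg _

lemma enorm_eq_zero_iff {n : ℕ} (x : Fin n → ℝ) : _root_.enorm x = 0 ↔ x = 0 := by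
  rw [enorm_eq_norm, norm_eq_zero]
  constructor
  · intro h; have := congrArg (WithLp.equiv 2 (Fin n → ℝ)) h; simpa using this
  · rintro rfl; simp

lemma enorm_convex {n : ℕ} (u v : Fin n → ℝ) (s t : ℝ) (hs : 0 ≤ s) (ht : 0 ≤ t) :
    _root_.enorm (s • u + t • v) ≤ s * _root_.enorm u + t * _root_.enorm v := by
  simp only [enorm_eq_norm]
  have : (WithLp.equiv 2 (Fin n → ℝ)).symm (s • u + t • v)
      = s • (WithLp.equiv 2 (Fin n → ℝ)).symm u + t • (WithLp.equiv 2 (Fin n → ℝ)).symm v := by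
    rfl
  rw [this]
  calc ‖s • (WithLp.equiv 2 (Fin n → ℝ)).symm u + t • (WithLp.equiv 2 (Fin n → ℝ)).symm v‖
      ≤ ‖s • (WithLp.equiv 2 (Fin n → ℝ)).symm u‖ + ‖t • (WithLp.equiv 2 (Fin n → ℝ)).symm v‖ :=
        norm_add_le _ _
    _ = s * ‖_‖ + t * ‖_‖ := by rw [norm_smul, norm_smul, Real.norm_eq_abs, Real.norm_eq_abs,
        abs_of_nonneg hs, abs_of_nonneg ht]

lemma onenorm_convex {n : ℕ} (u v : Fin n → ℝ) (s t : ℝ) (hs : 0 ≤ s) (ht : 0 ≤ t) :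
    onenorm (s • u + t • v) ≤ s * onenorm u + t * onenorm v := by
  simp only [onenorm, Finset.mul_sum]
  rw [← Finset.sum_add_distrib]
  refine Finset.sum_le_sum fun i _ => ?_
  calc |(s • u + t • v) i| = |s * u i + t * v i| := by simp [mul_comm]
    _ ≤ |s * u i| + |t * v i| := abs_add_le _ _
    _ = s * |u i| + t * |v i| := by
        rw [abs_mul, abs_mul, abs_of_nonneg hs, abs_of_nonneg ht]

/-- Theorem 3 of the paper (robustness induced by 1-norm regularization): a minimizer of
the 1-norm-regularized problem also minimizes the conic objective `‖Ag − b‖ + ρ_c‖g‖₁`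
with `ρ_c` given by eq. (38). -/
theorem one_norm_regularization_robustness
    (m n : ℕ) (A : Matrix (Fin m) (Fin n) ℝ) (b : Fin m → ℝ)
    (lamg : ℝ) (hlamg : 0 < lamg)
    (𝒢 : Set (Fin n → ℝ)) (h𝒢ne : 𝒢.Nonempty) (h𝒢cl : IsClosed 𝒢) (h𝒢cv : Convex ℝ 𝒢)
    (gs : Fin n → ℝ) (hgs : gs ∈ 𝒢)
    (hmin : ∀ g ∈ 𝒢,
      (_root_.enorm (A.mulVec gs - b)) ^ 2 + lamg * onenorm gs
        ≤ (_root_.enorm (A.mulVec g - b)) ^ 2 + lamg * onenorm g)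
    (ρc : ℝ)
    (hρc1 : A.mulVec gs ≠ b → ρc = lamg / (2 * _root_.enorm (A.mulVec gs - b)))
    (hρc2 : A.mulVec gs = b → ρc = lamg / 2) :
    ∀ g ∈ 𝒢,
      _root_.enorm (A.mulVec gs - b) + ρc * onenorm gs
        ≤ _root_.enorm (A.mulVec g - b) + ρc * onenorm g := by
  intro g hg
  set a := _root_.enorm (A.mulVec gs - b) with ha
  set c := _root_.enorm (A.mulVec g - b) with hc
  have ha0 : 0 ≤ a := enorm_nonneg' _
  have hc0 : 0 ≤ c := enorm_nonneg' _
  -- key inequality: for all θ ∈ (0,1], 2a(a−c) ≤ lamg*(Hg−Hs) + θ(a−c)^2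
  have key : ∀ θ : ℝ, 0 < θ → θ ≤ 1 →
      2 * a * (a - c) ≤ lamg * (onenorm g - onenorm gs) + θ * (a - c) ^ 2 := by
    intro θ hθ0 hθ1
    set gθ := (1 - θ) • gs + θ • g with hgθ
    have hmem : gθ ∈ 𝒢 := h𝒢cv hgs hg (by linarith) (le_of_lt hθ0) (by ring)
    have hAgθ : A.mulVec gθ - b = (1 - θ) • (A.mulVec gs - b) + θ • (A.mulVec g - b) := by
      rw [hgθ]
      simp [Matrix.mulVec_add, Matrix.mulVec_smul]
      funext i
      simp [Pi.add_apply, Pi.smul_apply, Pi.sub_apply, smul_eq_mul]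
      ring
    have hE : _root_.enorm (A.mulVec gθ - b) ≤ (1 - θ) * a + θ * c := by
      rw [hAgθ]; exact enorm_convex _ _ _ _ (by linarith) (le_of_lt hθ0)
    have hH : onenorm gθ ≤ (1 - θ) * onenorm gs + θ * onenorm g := by
      rw [hgθ]; exact onenorm_convex _ _ _ _ (by linarith) (le_of_lt hθ0)
    have hmin' := hmin gθ hmem
    have hE0 : 0 ≤ _root_.enorm (A.mulVec gθ - b) := enorm_nonneg' _
    have hE2 : (_root_.enorm (A.mulVec gθ - b)) ^ 2 ≤ ((1 - θ) * a + θ * c) ^ 2 := by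
      nlinarith
    have h1 : a ^ 2 + lamg * onenorm gs ≤
        ((1 - θ) * a + θ * c) ^ 2 + lamg * ((1 - θ) * onenorm gs + θ * onenorm g) := by
      nlinarith
    -- divide by θ
    have h2 : θ * (2 * a * (a - c)) ≤
        θ * (lamg * (onenorm g - onenorm gs) + θ * (a - c) ^ 2) := by nlinarith
    exact le_of_mul_le_mul_left (by linarith [h2]) hθ0
  -- take θ → 0
  have key0 : 2 * a * (a - c) ≤ lamg * (onenorm g - onenorm gs) := by
    refine le_of_forall_pos_le_add fun ε hε => ?_
    have hθ0 : 0 < min 1 (ε / ((a - c) ^ 2 + 1)) := by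
      apply lt_min one_pos
      positivity
    have hθ1 : min 1 (ε / ((a - c) ^ 2 + 1)) ≤ 1 := min_le_left _ _
    have h := key _ hθ0 hθ1
    have hθε : min 1 (ε / ((a - c) ^ 2 + 1)) * (a - c) ^ 2 ≤ ε := by
      have h1 : min 1 (ε / ((a - c) ^ 2 + 1)) ≤ ε / ((a - c) ^ 2 + 1) := min_le_right _ _
      have h2 : (0:ℝ) < (a - c) ^ 2 + 1 := by positivity
      calc min 1 (ε / ((a - c) ^ 2 + 1)) * (a - c) ^ 2
          ≤ ε / ((a - c) ^ 2 + 1) * (a - c) ^ 2 := by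
            apply mul_le_mul_of_nonneg_right h1 (by positivity)
        _ ≤ ε := by
            rw [div_mul_eq_mul_div, div_le_iff₀ h2]
            nlinarith
    linarith
  by_cases hb : A.mulVec gs = b
  · -- a = 0
    have ha' : a = 0 := by
      rw [ha, (enorm_eq_zero_iff _)]
      rw [hb]; simp
    rw [hρc2 hb]
    have hΔ : onenorm gs ≤ onenorm g := by nlinarith
    have : lamg / 2 * onenorm gs ≤ lamg / 2 * onenorm g :=
      mul_le_mul_of_nonneg_left hΔ (by linarith)
    linarith
  · have ha' : 0 < a := by
      rcases lt_or_eq_of_le ha0 with h | h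
      · exact h
      · exfalso; apply hb
        have : A.mulVec gs - b = 0 := (enorm_eq_zero_iff _).mp h.symm
        funext i
        have := congrFun this i
        simp [Pi.sub_apply] at this
        linarith [this]
    rw [hρc1 hb]

    have h2a : (0:ℝ) < 2 * a := by linarith
    rw [div_eq_mul_inv]
    have hgoal : a - c ≤ lamg * (2 * a)⁻¹ * (onenorm g - onenorm gs) := by
      rw [← mul_le_mul_iff_of_pos_left h2a]
      have : 2 * a * (lamg * (2 * a)⁻¹ * (onenorm g - onenorm gs))
          = lamg * (onenorm g - onenorm gs) := by
        field_simp
      rw [this]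
      nlinarith
    nlinarith [hgoal]
end
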